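/- The dihedral quandle of order n ≥ 4 is not two-point homogeneous. -/

import Mathlib

/-- A quandle given by a family of permutations `s x` satisfying
`s x x = x` and `s x ∘ s y = s (s x y) ∘ s x`. -/
structure SQuandle (X : Type*) where
  s : X → Equiv.Perm X
  fix : ∀ x, s x x = x
  dist : ∀ x y, s x * s y = s (s x y) * s x

/-- The inner automorphism group: the subgroup of permutations generated by the `s x`. -/
def Inn {X : Type*} (s : X → Equiv.Perm X) : Subgroup (Equiv.Perm X) :=
  Subgroup.closure (Set.range s)

/-- Two-point homogeneity with respect to the inner automorphism group. -/
def TwoPointHomogeneous {X : Type*} (s : X → Equiv.Perm X) : Prop :=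
  ∀ x₁ x₂ y₁ y₂ : X, x₁ ≠ x₂ → y₁ ≠ y₂ →
    ∃ f ∈ Inn s, f x₁ = y₁ ∧ f x₂ = y₂

/-- Connectedness: the inner automorphism group acts transitively. -/
def QConnected {X : Type*} (s : X → Equiv.Perm X) : Prop :=
  ∀ x y : X, ∃ f ∈ Inn s, f x = y

/-- Cyclic type: each `s x` acts on `X \ {x}` as a single cycle of order `#X - 1`,
i.e. `s x` is a cycle whose support is the complement of `{x}`. -/
def CyclicType {X : Type*} [Fintype X] [DecidableEq X] (s : X → Equiv.Perm X) : Prop :=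
  ∀ x : X, (s x).IsCycle ∧ (s x).support = {x}ᶜ

/-- The symmetry `j ↦ 2*i - j` of the dihedral quandle on `ZMod n`. -/
def dihedralS (n : ℕ) (i : ZMod n) : Equiv.Perm (ZMod n) :=
  Function.Involutive.toPerm (fun j => 2 * i - j) (fun j => by ring)

/-- the dihedral quandle of order `n ≥ 4` is not two-point homogeneous. -/
lemma dihedral_inn_diff (n : ℕ) {f : Equiv.Perm (ZMod n)} (hf : f ∈ Inn (dihedralS n)) :
    ∀ x y : ZMod n, f x - f y = x - y ∨ f x - f y = -(x - y) := by
  refine Subgroup.closure_induction ?_ ?_ ?_ ?_ hf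
  · rintro g ⟨i, rfl⟩ x y
    right
    show (2 * i - x) - (2 * i - y) = -(x - y)
    ring
  · intro x y; left; rfl
  · intro g h _ _ hg hh x y
    rcases hh x y with h1 | h1 <;> rcases hg (h x) (h y) with h2 | h2 <;>
      simp only [Equiv.Perm.mul_apply] <;> rw [h2, h1] <;> simp [neg_neg]
  · intro g _ hg x y
    rcases hg (g⁻¹ x) (g⁻¹ y) with h1 | h1 <;>
      simp only [← Equiv.Perm.mul_apply, mul_inv_cancel, Equiv.Perm.one_apply] at h1
    · left; exact h1.symm
    · right; linear_combination h1

theorem dihedral_not_twoPointHomogeneous (n : ℕ) (hn : 4 ≤ n) :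
    ¬ TwoPointHomogeneous (dihedralS n) := by
  have hch : ∀ k : ℕ, 0 < k → k < 4 → ((k : ZMod n) ≠ 0) := by
    intro k hk1 hk2 h
    rw [ZMod.natCast_eq_zero_iff] at h
    have := Nat.le_of_dvd hk1 h
    omega
  intro H
  obtain ⟨f, hf, h0, h1⟩ := H 0 1 0 2
    (fun h => hch 1 (by norm_num) (by norm_num) (by simpa using h.symm))
    (fun h => hch 2 (by norm_num) (by norm_num) (by simpa using h.symm))
  have := dihedral_inn_diff n hf 0 1
  rw [h0, h1] at this
  rcases this with h | h
  · have : (1 : ZMod n) = 0 := by linear_combination -h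
    exact hch 1 (by norm_num) (by norm_num) (by simpa using this)
  · have : ((3 : ℕ) : ZMod n) = 0 := by push_cast; linear_combination -h
    exact hch 3 (by norm_num) (by norm_num) this
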